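/- Let g be a complex reductive Lie algebra with non-degenerate invariant form, and x ∈ g. The set z(g^x)^{reg} := {y ∈ z(g^x) : g^y = g^x} coincides with {y ∈ z(g^x) : rank(ad_g(y)) = rank(ad_g(x))} and with {y ∈ z(g^x) : z(g^y) = z(g^x)}; it is a Zariski open subset of z(g^x) containing x, hence irreducible. -/

import Mathlib

def IsReductiveLie (R L : Type*) [CommRing R] [LieRing L] [LieAlgebra R L] : Prop :=
  LieAlgebra.radical R L = LieAlgebra.center R L

/-- The centralizer `g^x` of `x`, as a subset. -/
def cent {L : Type*} [LieRing L] (x : L) : Set L := {z : L | ⁅z, x⁆ = 0}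

/-- The center `z(g^x)` of the centralizer of `x`, as a subset. -/
def zcent {L : Type*} [LieRing L] (x : L) : Set L :=
  {y : L | ⁅y, x⁆ = 0 ∧ ∀ z : L, ⁅z, x⁆ = 0 → ⁅y, z⁆ = 0}

/-- The Zariski topology on a complex vector space: generated by the complements of zero
sets of polynomial functions. -/
def zariskiTopology (L : Type*) [AddCommGroup L] [Module ℂ L] : TopologicalSpace L :=
  TopologicalSpace.generateFrom
    {U : Set L | ∃ p ∈ Algebra.adjoin ℂ (Set.range fun f : Module.Dual ℂ L => ⇑f),
      U = {x : L | p x ≠ 0}}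

open Module LinearMap

section Aux
variable {L : Type*} [LieRing L] [LieAlgebra ℂ L]

omit [LieAlgebra ℂ L] in
lemma lie_zero_comm {a b : L} (h : ⁅a, b⁆ = 0) : ⁅b, a⁆ = 0 := by
  rw [← lie_skew, h, neg_zero]

/-- `zcent x` as a submodule. -/
def zcentSub (x : L) : Submodule ℂ L where
  carrier := zcent x
  add_mem' := by
    rintro a b ⟨ha1, ha2⟩ ⟨hb1, hb2⟩
    exact ⟨by rw [add_lie, ha1, hb1, add_zero],
      fun z hz => by rw [add_lie, ha2 z hz, hb2 z hz, add_zero]⟩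
  zero_mem' := ⟨zero_lie x, fun z _ => zero_lie z⟩
  smul_mem' := by
    rintro c a ⟨ha1, ha2⟩
    exact ⟨by rw [smul_lie, ha1, smul_zero],
      fun z hz => by rw [smul_lie, ha2 z hz, smul_zero]⟩

lemma cent_eq_ker (y : L) : cent y = ↑(LinearMap.ker (LieAlgebra.ad ℂ L y)) := by
  ext z
  simp only [cent, Set.mem_setOf_eq, SetLike.mem_coe, LinearMap.mem_ker, LieAlgebra.ad_apply]
  exact ⟨lie_zero_comm, lie_zero_comm⟩

omit [LieRing L] [LieAlgebra ℂ L] in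
lemma rank_ge_iff [AddCommGroup L] [Module ℂ L] [Module.Finite ℂ L] (f : L →ₗ[ℂ] L) (r : ℕ) :
    r ≤ finrank ℂ (LinearMap.range f) ↔
      ∃ (v : Fin r → L) (φ : Fin r → Module.Dual ℂ L),
        (Matrix.of fun i j => φ i (f (v j))).det ≠ 0 := by
  classical
  constructor
  · intro h
    let B := Module.finBasis ℂ (LinearMap.range f)
    let w : Fin r → LinearMap.range f := fun j => B (Fin.castLE h j)
    have hw : LinearIndependent ℂ w :=
      B.linearIndependent.comp _ (Fin.castLE_injective h)
    let u : Fin r → L := fun j => (w j : L)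
    have hu : LinearIndependent ℂ u :=
      hw.map' (LinearMap.range f).subtype (Submodule.ker_subtype _)
    have hex : ∀ j, ∃ a, f a = u j := fun j => LinearMap.mem_range.mp (w j).2
    choose v hv using hex
    set W := Submodule.span ℂ (Set.range u) with hW
    let Bw : Basis (Fin r) ℂ W := Basis.span hu
    obtain ⟨q, hq⟩ := Submodule.exists_isCompl W
    let π := W.projectionOnto q hq
    refine ⟨v, fun i => Bw.coord i ∘ₗ π, ?_⟩
    have hM : (Matrix.of fun i j => (Bw.coord i ∘ₗ π) (f (v j))) = 1 := by
      ext i j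
      have h1 : f (v j) = ↑(Bw j) := by rw [hv j, Basis.span_apply]
      rw [Matrix.of_apply, LinearMap.comp_apply, h1]
      simp only [π]
      rw [Submodule.projectionOnto_apply_left, Module.Basis.coord_apply, Module.Basis.repr_self,
        Matrix.one_apply, Finsupp.single_apply]
      simp [eq_comm]
    rw [hM]
    simp
  · rintro ⟨v, φ, hdet⟩
    have hli : LinearIndependent ℂ
        (fun j => (⟨f (v j), LinearMap.mem_range_self f (v j)⟩ : LinearMap.range f)) := by
      rw [Fintype.linearIndependent_iff]
      intro c hc
      have hc' : ∑ j, c j • f (v j) = 0 := by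
        have h2 := congrArg ((LinearMap.range f).subtype) hc
        simpa using h2
      have hmv : (Matrix.of fun i j => φ i (f (v j))).mulVec c = 0 := by
        funext i
        have h3 := congrArg (φ i) hc'
        simp only [map_sum, map_smul, map_zero, smul_eq_mul] at h3
        simpa [Matrix.mulVec, dotProduct, mul_comm] using h3
      intro j
      exact congrFun (Matrix.eq_zero_of_mulVec_eq_zero hdet hmv) j
    simpa using hli.fintype_card_le_finrank

lemma det_mem_adjoin {r : ℕ} (v : Fin r → L) (φ : Fin r → Module.Dual ℂ L) :
    (fun y : L => (Matrix.of fun i j => φ i ⁅y, v j⁆).det) ∈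
      Algebra.adjoin ℂ (Set.range fun f : Module.Dual ℂ L => ⇑f) := by
  classical
  have hfun : (fun y : L => (Matrix.of fun i j => φ i ⁅y, v j⁆).det)
      = ∑ σ : Equiv.Perm (Fin r),
          Equiv.Perm.sign σ • ∏ i, (fun y : L => φ (σ i) ⁅y, v i⁆) := by
    funext y
    rw [Matrix.det_apply]
    simp [Finset.sum_apply, Finset.prod_apply]
  rw [hfun]
  refine Subalgebra.sum_mem _ fun σ _ => ?_
  rw [Units.smul_def]
  refine zsmul_mem (Subalgebra.prod_mem _ fun i _ => ?_) _
  have h1 : (fun y : L => φ (σ i) ⁅y, v i⁆)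
      = ⇑(-(φ (σ i) ∘ₗ (LieAlgebra.ad ℂ L (v i)))) := by
    funext y
    simp only [LinearMap.neg_apply, LinearMap.comp_apply, LieAlgebra.ad_apply]
    rw [← map_neg, lie_skew]
  rw [h1]
  exact Algebra.subset_adjoin ⟨_, rfl⟩

omit [LieRing L] [LieAlgebra ℂ L] in
lemma exists_poly [AddCommGroup L] [Module ℂ L] {p : L → ℂ}
    (hp : p ∈ Algebra.adjoin ℂ (Set.range fun f : Module.Dual ℂ L => ⇑f)) (a b : L) :
    ∃ q : Polynomial ℂ, ∀ t : ℂ, p (a + t • b) = q.eval t := by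
  induction hp using Algebra.adjoin_induction with
  | mem f hf =>
    obtain ⟨g, rfl⟩ := hf
    refine ⟨Polynomial.C (g a) + Polynomial.X * Polynomial.C (g b), fun t => ?_⟩
    simp only [map_add, map_smul, smul_eq_mul, Polynomial.eval_add, Polynomial.eval_C,
      Polynomial.eval_mul, Polynomial.eval_X]
  | algebraMap c => exact ⟨Polynomial.C c, fun t => by simp [Pi.algebraMap_apply]⟩
  | add p1 p2 h1 h2 ih1 ih2 =>
    obtain ⟨q1, hq1⟩ := ih1
    obtain ⟨q2, hq2⟩ := ih2
    exact ⟨q1 + q2, fun t => by simp [hq1 t, hq2 t]⟩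
  | mul p1 p2 h1 h2 ih1 ih2 =>
    obtain ⟨q1, hq1⟩ := ih1
    obtain ⟨q2, hq2⟩ := ih2
    exact ⟨q1 * q2, fun t => by simp [hq1 t, hq2 t]⟩

omit [LieRing L] [LieAlgebra ℂ L] in
lemma cof_preimage [AddCommGroup L] [Module ℂ L] (a b : L) {U : Set L}
    (h : TopologicalSpace.GenerateOpen
      {U : Set L | ∃ p ∈ Algebra.adjoin ℂ (Set.range fun f : Module.Dual ℂ L => ⇑f),
        U = {x : L | p x ≠ 0}} U) :
    {t : ℂ | a + t • b ∈ U} = ∅ ∨ ({t : ℂ | a + t • b ∈ U}ᶜ).Finite := by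
  induction h with
  | basic V hV =>
    obtain ⟨p, hp, rfl⟩ := hV
    obtain ⟨q, hq⟩ := exists_poly hp a b
    by_cases hq0 : q = 0
    · left
      ext t
      simp [hq t, hq0]
    · right
      refine (Polynomial.finite_setOf_isRoot hq0).subset ?_
      intro t ht
      simp only [Set.mem_compl_iff, Set.mem_setOf_eq, not_not] at ht
      simpa [Polynomial.IsRoot, ← hq t] using ht
  | univ => right; simp
  | inter s t _ _ ihs iht =>
    rcases ihs with hs | hs
    · left
      rw [Set.eq_empty_iff_forall_notMem] at hs ⊢
      exact fun u hu => hs u hu.1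
    rcases iht with ht | ht
    · left
      rw [Set.eq_empty_iff_forall_notMem] at ht ⊢
      exact fun u hu => ht u hu.2
    · right
      refine (hs.union ht).subset ?_
      intro u hu
      simp only [Set.mem_compl_iff, Set.mem_setOf_eq, Set.mem_inter_iff, not_and_or] at hu ⊢
      tauto
  | sUnion S _ ih =>
    by_cases hne : ∃ s ∈ S, {t : ℂ | a + t • b ∈ s}.Nonempty
    · obtain ⟨s, hsS, hne⟩ := hne
      rcases ih s hsS with h0 | hfin
      · rw [h0] at hne; exact absurd hne (by simp)
      · right
        refine hfin.subset ?_
        intro u hu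
        simp only [Set.mem_compl_iff, Set.mem_setOf_eq, Set.mem_sUnion] at hu ⊢
        exact fun hs => hu ⟨s, hsS, hs⟩
    · left
      push_neg at hne
      ext u
      simp only [Set.mem_setOf_eq, Set.mem_sUnion, Set.mem_empty_iff_false, iff_false]
      rintro ⟨s, hsS, hs⟩
      exact Set.eq_empty_iff_forall_notMem.mp (hne s hsS) u hs

end Aux

/-- the set `z(g^x)^{reg} = {y ∈ z(g^x) : g^y = g^x}` coincides with the rank
condition locus and with `{y ∈ z(g^x) : z(g^y) = z(g^x)}`; it is Zariski open in `z(g^x)`,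
contains `x`, and is irreducible. -/
theorem zcent_reg_characterizations
    {L : Type*} [LieRing L] [LieAlgebra ℂ L] [Module.Finite ℂ L]
    (hred : IsReductiveLie ℂ L)
    (κ : L →ₗ[ℂ] L →ₗ[ℂ] ℂ)
    (hnondeg : ∀ x : L, (∀ y : L, κ x y = 0) → x = 0)
    (hsymm : ∀ a b : L, κ a b = κ b a)
    (hinv : ∀ a b c : L, κ ⁅a, b⁆ c = κ a ⁅b, c⁆)
    (x : L) :
    ({y ∈ zcent x | cent y = cent x} =
      {y ∈ zcent x |
        Module.finrank ℂ (LinearMap.range (LieAlgebra.ad ℂ L y)) =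
        Module.finrank ℂ (LinearMap.range (LieAlgebra.ad ℂ L x))}) ∧
    ({y ∈ zcent x | cent y = cent x} = {y ∈ zcent x | zcent y = zcent x}) ∧
    x ∈ {y ∈ zcent x | cent y = cent x} ∧
    (∃ U : Set L, @IsOpen L (zariskiTopology L) U ∧
      {y ∈ zcent x | cent y = cent x} = zcent x ∩ U) ∧
    @IsIrreducible L (zariskiTopology L) {y ∈ zcent x | cent y = cent x} := by
  classical
  set r := finrank ℂ (LinearMap.range (LieAlgebra.ad ℂ L x)) with hr
  have hxz : x ∈ zcent x := ⟨lie_self x, fun z hz => lie_zero_comm hz⟩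
  have hsub : ∀ y ∈ zcent x, cent x ⊆ cent y := fun y hy z hz => lie_zero_comm (hy.2 z hz)
  have hkerle : ∀ y ∈ zcent x,
      LinearMap.ker (LieAlgebra.ad ℂ L x) ≤ LinearMap.ker (LieAlgebra.ad ℂ L y) := by
    intro y hy z hz
    rw [LinearMap.mem_ker, LieAlgebra.ad_apply] at hz ⊢
    exact lie_zero_comm (hsub y hy (lie_zero_comm hz))
  have hrn : ∀ y : L, finrank ℂ (LinearMap.range (LieAlgebra.ad ℂ L y))
      + finrank ℂ (LinearMap.ker (LieAlgebra.ad ℂ L y)) = finrank ℂ L :=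
    fun y => LinearMap.finrank_range_add_finrank_ker _
  have key : ∀ y ∈ zcent x, (cent y = cent x ↔
      finrank ℂ (LinearMap.range (LieAlgebra.ad ℂ L y)) = r) := by
    intro y hy
    have h1 := hrn x
    have h2 := hrn y
    constructor
    · intro h
      have hker : LinearMap.ker (LieAlgebra.ad ℂ L y) = LinearMap.ker (LieAlgebra.ad ℂ L x) :=
        SetLike.coe_injective (by rw [← cent_eq_ker, ← cent_eq_ker, h])
      have h3 : finrank ℂ (LinearMap.ker (LieAlgebra.ad ℂ L y))
          = finrank ℂ (LinearMap.ker (LieAlgebra.ad ℂ L x)) := by rw [hker]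
      omega
    · intro h
      have hkr : finrank ℂ (LinearMap.ker (LieAlgebra.ad ℂ L y))
          ≤ finrank ℂ (LinearMap.ker (LieAlgebra.ad ℂ L x)) := by omega
      have hker := Submodule.eq_of_le_of_finrank_le (hkerle y hy) hkr
      rw [cent_eq_ker, cent_eq_ker, hker]
  have hle : ∀ y ∈ zcent x, finrank ℂ (LinearMap.range (LieAlgebra.ad ℂ L y)) ≤ r := by
    intro y hy
    have hk := Submodule.finrank_mono (hkerle y hy)
    have h1 := hrn x
    have h2 := hrn y
    omega
  have part1 : {y ∈ zcent x | cent y = cent x} =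
      {y ∈ zcent x | finrank ℂ (LinearMap.range (LieAlgebra.ad ℂ L y)) = r} := by
    ext y
    simp only [Set.mem_setOf_eq]
    exact and_congr_right fun hy => key y hy
  have part2 : {y ∈ zcent x | cent y = cent x} = {y ∈ zcent x | zcent y = zcent x} := by
    ext y
    simp only [Set.mem_setOf_eq]
    refine and_congr_right fun hy => ?_
    constructor
    · intro h
      have hz : ∀ w : L, zcent w = {u | u ∈ cent w ∧ ∀ z ∈ cent w, ⁅u, z⁆ = 0} :=
        fun w => rfl
      rw [hz y, hz x, h]
    · intro h
      have hxy : x ∈ zcent y := h ▸ hxz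
      refine Set.Subset.antisymm ?_ (hsub y hy)
      intro z hz
      exact lie_zero_comm (hxy.2 z hz)
  have hxS : x ∈ {y ∈ zcent x | cent y = cent x} := ⟨hxz, rfl⟩
  -- the Zariski-open rank locus
  set T : Set (Set L) := {V | ∃ d : (Fin r → L) × (Fin r → Module.Dual ℂ L),
      V = {y : L | (Matrix.of fun i j => d.2 i ⁅y, d.1 j⁆).det ≠ 0}} with hT
  have hUopen' : TopologicalSpace.GenerateOpen
      {U : Set L | ∃ p ∈ Algebra.adjoin ℂ (Set.range fun f : Module.Dual ℂ L => ⇑f),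
        U = {x : L | p x ≠ 0}} (⋃₀ T) := by
    refine TopologicalSpace.GenerateOpen.sUnion T fun V hV => ?_
    obtain ⟨d, rfl⟩ := hV
    exact TopologicalSpace.GenerateOpen.basic _ ⟨_, det_mem_adjoin d.1 d.2, rfl⟩
  have hUopen : @IsOpen L (zariskiTopology L) (⋃₀ T) := hUopen'
  have hmemU : ∀ y : L, y ∈ ⋃₀ T ↔
      r ≤ finrank ℂ (LinearMap.range (LieAlgebra.ad ℂ L y)) := by
    intro y
    rw [rank_ge_iff]
    constructor
    · rintro ⟨V, ⟨d, rfl⟩, hy⟩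
      refine ⟨d.1, d.2, ?_⟩
      simpa [LieAlgebra.ad_apply] using hy
    · rintro ⟨v, φ, h⟩
      exact ⟨_, ⟨(v, φ), rfl⟩, by simpa [LieAlgebra.ad_apply] using h⟩
  have part4 : {y ∈ zcent x | cent y = cent x} = zcent x ∩ ⋃₀ T := by
    ext y
    simp only [Set.mem_setOf_eq, Set.mem_inter_iff]
    refine and_congr_right fun hy => ?_
    rw [key y hy, hmemU y]
    have := hle y hy
    omega
  refine ⟨part1, part2, hxS, ⟨⋃₀ T, hUopen, part4⟩, ⟨x, hxS⟩, ?_⟩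
  rintro u v hu hv ⟨a, haS, hau⟩ ⟨b, hbS, hbv⟩
  have hu' : TopologicalSpace.GenerateOpen
      {U : Set L | ∃ p ∈ Algebra.adjoin ℂ (Set.range fun f : Module.Dual ℂ L => ⇑f),
        U = {x : L | p x ≠ 0}} u := hu
  have hv' : TopologicalSpace.GenerateOpen
      {U : Set L | ∃ p ∈ Algebra.adjoin ℂ (Set.range fun f : Module.Dual ℂ L => ⇑f),
        U = {x : L | p x ≠ 0}} v := hv
  have haZ : a ∈ zcentSub x := haS.1
  have hbZ : b ∈ zcentSub x := hbS.1
  have hline : ∀ t : ℂ, a + t • (b - a) ∈ zcent x := fun t =>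
    (zcentSub x).add_mem haZ ((zcentSub x).smul_mem t ((zcentSub x).sub_mem hbZ haZ))
  have c1 := cof_preimage a (b - a) hu'
  have c2 := cof_preimage a (b - a) hv'
  have c3 := cof_preimage a (b - a) hUopen'
  have h0u : (0 : ℂ) ∈ {t : ℂ | a + t • (b - a) ∈ u} := by simpa using hau
  have h1v : (1 : ℂ) ∈ {t : ℂ | a + t • (b - a) ∈ v} := by
    have hb : a + (1 : ℂ) • (b - a) = b := by
      rw [one_smul]
      abel
    simpa [hb] using hbv
  have h0U : (0 : ℂ) ∈ {t : ℂ | a + t • (b - a) ∈ ⋃₀ T} := by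
    have : a ∈ ⋃₀ T := (part4 ▸ haS).2
    simpa using this
  rcases c1 with hc1 | hc1
  · rw [hc1] at h0u; exact absurd h0u (by simp)
  rcases c2 with hc2 | hc2
  · rw [hc2] at h1v; exact absurd h1v (by simp)
  rcases c3 with hc3 | hc3
  · rw [hc3] at h0U; exact absurd h0U (by simp)
  obtain ⟨t, ht⟩ := ((hc1.union (hc2.union hc3)).infinite_compl).nonempty
  simp only [Set.compl_union, compl_compl, Set.mem_inter_iff, Set.mem_setOf_eq] at ht
  rw [part4]
  exact ⟨a + t • (b - a), ⟨hline t, ht.2.2⟩, ht.1, ht.2.1⟩
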